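/- Let N be a positive integer divisible by 4 and let f : [-1,1] → ℝ be a continuous function with f(x) ≥ 0 for all x ∈ [-1,1]. Then the Jackson damped Chebyshev approximation f̄_N(x) = Σ_{k=0}^{N} (b̂_N[k]/b̂_N[0]) · ⟨f, w·T̄_k⟩ · T̄_k(x) satisfies f̄_N(x) ≥ 0 for all x ∈ [-1,1]. -/

import Mathlib

open MeasureTheory

/-- The normalized Chebyshev polynomials of the first kind, as functions on `ℝ`:
`T̄_0 = T_0 / √π` and `T̄_k = √(2/π) · T_k` for `k ≥ 1`. -/
noncomputable def Tbar (k : ℕ) (x : ℝ) : ℝ :=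
  if k = 0 then ((Polynomial.Chebyshev.T ℝ 0).eval x) / Real.sqrt Real.pi
  else Real.sqrt (2 / Real.pi) * ((Polynomial.Chebyshev.T ℝ (k : ℤ)).eval x)

/-- The Chebyshev weight function `w(x) = 1/√(1 - x²)`. -/
noncomputable def wCheb (x : ℝ) : ℝ := 1 / Real.sqrt (1 - x ^ 2)

/-- The Jackson coefficients
`b̂_N[k] = Σ_{j = -N/2-1}^{N/2+1-k} (N/2+1-|j|)·(N/2+1-|j+k|)`. -/
noncomputable def bhat (N k : ℕ) : ℝ :=
  ∑ j ∈ Finset.Icc (-(N : ℤ) / 2 - 1) ((N : ℤ) / 2 + 1 - (k : ℤ)),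
    ((((N : ℤ) / 2 + 1 - |j|) * ((N : ℤ) / 2 + 1 - |j + (k : ℤ)|) : ℤ) : ℝ)

/-- The Chebyshev coefficient `⟨f, w·T̄_k⟩ = ∫_{-1}^1 f(x)·w(x)·T̄_k(x) dx`. -/
noncomputable def chebCoeff (f : ℝ → ℝ) (k : ℕ) : ℝ :=
  ∫ x in (-1 : ℝ)..1, f x * (wCheb x * Tbar k x)

/-- The Jackson damped Chebyshev approximation
`f̄_N(x) = Σ_{k=0}^N (b̂_N[k]/b̂_N[0]) · ⟨f, w·T̄_k⟩ · T̄_k(x)`. -/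
noncomputable def jacksonApprox (N : ℕ) (f : ℝ → ℝ) (x : ℝ) : ℝ :=
  ∑ k ∈ Finset.range (N + 1), (bhat N k / bhat N 0) * chebCoeff f k * Tbar k x

noncomputable def cfun (N : ℕ) (j : ℤ) : ℝ := (((N : ℤ) / 2 + 1 - |j| : ℤ) : ℝ)

noncomputable def Iset (N : ℕ) : Finset ℤ := Finset.Icc (-(N : ℤ) / 2 - 1) ((N : ℤ) / 2 + 1)

lemma bhat_eq (N k : ℕ) :
    bhat N k = ∑ j ∈ Finset.Icc (-(N : ℤ) / 2 - 1) ((N : ℤ) / 2 + 1 - (k : ℤ)),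
      cfun N j * cfun N (j + k) := by
  simp [bhat, cfun]

lemma bhat_pair (N k : ℕ) :
    bhat N k = ∑ p ∈ ((Iset N) ×ˢ (Iset N)).filter (fun p => p.2 - p.1 = (k : ℤ)),
      cfun N p.1 * cfun N p.2 := by
  rw [bhat_eq]
  refine Finset.sum_nbij' (fun j => (j, j + (k : ℤ))) (fun p => p.1) ?_ ?_ ?_ ?_ ?_
  · intro j hj
    simp only [Finset.mem_Icc] at hj
    simp only [Finset.mem_filter, Finset.mem_product, Iset, Finset.mem_Icc]
    omega
  · intro p hp
    simp only [Finset.mem_filter, Finset.mem_product, Iset, Finset.mem_Icc] at hp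
    simp only [Finset.mem_Icc]
    omega
  · intro j hj; rfl
  · intro p hp
    simp only [Finset.mem_filter, Finset.mem_product, Iset, Finset.mem_Icc] at hp
    have : p.1 + (k : ℤ) = p.2 := by omega
    exact Prod.ext rfl this
  · intro j hj; rfl

lemma upper_sum (N : ℕ) (α : ℝ) :
    ∑ p ∈ ((Iset N) ×ˢ (Iset N)).filter (fun p => p.1 < p.2),
        cfun N p.1 * cfun N p.2 * Real.cos (((p.2 - p.1 : ℤ) : ℝ) * α)
      = ∑ k ∈ Finset.Icc 1 (N + 2), bhat N k * Real.cos ((k : ℝ) * α) := by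
  have : ∀ k ∈ Finset.Icc 1 (N + 2), bhat N k * Real.cos ((k : ℝ) * α)
      = ∑ p ∈ ((Iset N) ×ˢ (Iset N)).filter (fun p => p.2 - p.1 = (k : ℤ)),
          cfun N p.1 * cfun N p.2 * Real.cos ((k : ℝ) * α) := by
    intro k _
    rw [bhat_pair, Finset.sum_mul]
  rw [Finset.sum_congr rfl this, Finset.sum_sigma']
  refine (Finset.sum_nbij' (fun x => x.2) (fun p => ⟨(p.2 - p.1).toNat, p⟩) ?_ ?_ ?_ ?_ ?_).symm
  · intro x hx
    simp only [Finset.mem_sigma, Finset.mem_Icc, Finset.mem_filter, Finset.mem_product,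
      Iset] at hx ⊢
    refine ⟨hx.2.1, ?_⟩
    have := hx.2.2
    have := hx.1.1
    omega
  · intro p hp
    simp only [Finset.mem_sigma, Finset.mem_Icc, Finset.mem_filter, Finset.mem_product,
      Iset] at hp ⊢
    omega
  · intro x hx
    simp only [Finset.mem_sigma, Finset.mem_filter] at hx
    have h2 : x.2.2 - x.2.1 = (x.1 : ℤ) := hx.2.2
    show (⟨(x.2.2 - x.2.1).toNat, x.2⟩ : (_ : ℕ) × ℤ × ℤ) = x
    rw [h2, Int.toNat_natCast]
  · intro p hp; rfl
  · intro x hx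
    simp only [Finset.mem_sigma, Finset.mem_filter] at hx
    have h2 : x.2.2 - x.2.1 = (x.1 : ℤ) := hx.2.2
    rw [h2]
    norm_cast

lemma double_sum_eq (N : ℕ) (α : ℝ) :
    ∑ p ∈ (Iset N) ×ˢ (Iset N), cfun N p.1 * cfun N p.2 * Real.cos (((p.2 - p.1 : ℤ) : ℝ) * α)
      = bhat N 0 + 2 * ∑ k ∈ Finset.Icc 1 (N + 2), bhat N k * Real.cos ((k : ℝ) * α) := by
  classical
  set P := (Iset N) ×ˢ (Iset N) with hP
  set F : ℤ × ℤ → ℝ := fun p => cfun N p.1 * cfun N p.2 * Real.cos (((p.2 - p.1 : ℤ) : ℝ) * α)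
    with hF
  have h1 : ∑ p ∈ P, F p
      = ∑ p ∈ P.filter (fun p => p.1 < p.2), F p
        + ∑ p ∈ P.filter (fun p => ¬ p.1 < p.2), F p :=
    (Finset.sum_filter_add_sum_filter_not P _ F).symm
  have h2 : ∑ p ∈ P.filter (fun p => ¬ p.1 < p.2), F p
      = ∑ p ∈ (P.filter (fun p => ¬ p.1 < p.2)).filter (fun p => p.2 < p.1), F p
        + ∑ p ∈ (P.filter (fun p => ¬ p.1 < p.2)).filter (fun p => ¬ p.2 < p.1), F p :=
    (Finset.sum_filter_add_sum_filter_not _ _ F).symm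
  have e1 : (P.filter (fun p => ¬ p.1 < p.2)).filter (fun p => p.2 < p.1)
      = P.filter (fun p => p.2 < p.1) := by
    ext p; simp only [Finset.mem_filter]; constructor
    · rintro ⟨⟨h, _⟩, h'⟩; exact ⟨h, h'⟩
    · rintro ⟨h, h'⟩; exact ⟨⟨h, by omega⟩, h'⟩
  have e2 : (P.filter (fun p => ¬ p.1 < p.2)).filter (fun p => ¬ p.2 < p.1)
      = P.filter (fun p => p.2 - p.1 = ((0 : ℕ) : ℤ)) := by
    ext p; simp only [Finset.mem_filter]; constructor
    · rintro ⟨⟨h, h1⟩, h2⟩; exact ⟨h, by omega⟩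
    · rintro ⟨h, h'⟩; exact ⟨⟨h, by omega⟩, by omega⟩
  have hdiag : ∑ p ∈ P.filter (fun p => p.2 - p.1 = ((0 : ℕ) : ℤ)), F p = bhat N 0 := by
    rw [bhat_pair]
    refine Finset.sum_congr rfl ?_
    intro p hp
    simp only [Finset.mem_filter] at hp
    have : ((p.2 - p.1 : ℤ) : ℝ) = 0 := by rw [hp.2]; norm_cast
    rw [hF]
    simp [this]
  have hlow : ∑ p ∈ P.filter (fun p => p.2 < p.1), F p
      = ∑ p ∈ P.filter (fun p => p.1 < p.2), F p := by
    refine Finset.sum_nbij' (fun p => (p.2, p.1)) (fun p => (p.2, p.1)) ?_ ?_ ?_ ?_ ?_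
    · intro p hp
      simp only [Finset.mem_filter, hP, Finset.mem_product] at hp ⊢
      exact ⟨⟨hp.1.2, hp.1.1⟩, hp.2⟩
    · intro p hp
      simp only [Finset.mem_filter, hP, Finset.mem_product] at hp ⊢
      exact ⟨⟨hp.1.2, hp.1.1⟩, hp.2⟩
    · intro p _; rfl
    · intro p _; rfl
    · intro p _
      show F p = cfun N p.2 * cfun N p.1 * Real.cos (((p.1 - p.2 : ℤ) : ℝ) * α)
      have : ((p.1 - p.2 : ℤ) : ℝ) = -((p.2 - p.1 : ℤ) : ℝ) := by push_cast; ring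
      rw [this, neg_mul, Real.cos_neg, hF]
      ring
  rw [h1, h2, e1, e2, hdiag, hlow, upper_sum]
  ring

lemma J_nonneg (N : ℕ) (α : ℝ) :
    0 ≤ bhat N 0 + 2 * ∑ k ∈ Finset.Icc 1 (N + 2), bhat N k * Real.cos ((k : ℝ) * α) := by
  rw [← double_sum_eq]
  have expand : ∀ p ∈ (Iset N) ×ˢ (Iset N),
      cfun N p.1 * cfun N p.2 * Real.cos (((p.2 - p.1 : ℤ) : ℝ) * α)
        = (cfun N p.1 * Real.cos ((p.1 : ℝ) * α)) * (cfun N p.2 * Real.cos ((p.2 : ℝ) * α))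
          + (cfun N p.1 * Real.sin ((p.1 : ℝ) * α)) * (cfun N p.2 * Real.sin ((p.2 : ℝ) * α)) := by
    intro p _
    have h : ((p.2 - p.1 : ℤ) : ℝ) * α = (p.2 : ℝ) * α - (p.1 : ℝ) * α := by push_cast; ring
    rw [h, Real.cos_sub]; ring
  rw [Finset.sum_congr rfl expand, Finset.sum_add_distrib]
  have hc : ∑ p ∈ (Iset N) ×ˢ (Iset N),
      (cfun N p.1 * Real.cos ((p.1 : ℝ) * α)) * (cfun N p.2 * Real.cos ((p.2 : ℝ) * α))
        = (∑ j ∈ Iset N, cfun N j * Real.cos ((j : ℝ) * α)) ^ 2 := by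
    rw [sq, Finset.sum_mul_sum, ← Finset.sum_product']
  have hs : ∑ p ∈ (Iset N) ×ˢ (Iset N),
      (cfun N p.1 * Real.sin ((p.1 : ℝ) * α)) * (cfun N p.2 * Real.sin ((p.2 : ℝ) * α))
        = (∑ j ∈ Iset N, cfun N j * Real.sin ((j : ℝ) * α)) ^ 2 := by
    rw [sq, Finset.sum_mul_sum, ← Finset.sum_product']
  rw [hc, hs]
  positivity

lemma bhat_eq_zero (N k : ℕ) (hN : 2 ∣ N) (hk : N < k) : bhat N k = 0 := by
  rw [bhat_eq]
  by_cases h : (k : ℤ) ≤ (N : ℤ) + 2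
  · refine Finset.sum_eq_zero ?_
    intro j hj
    simp only [Finset.mem_Icc] at hj
    obtain ⟨m, rfl⟩ := hN
    have hm : ((2 * m : ℕ) : ℤ) / 2 = (m : ℤ) := by push_cast; omega
    rw [hm] at hj
    push_cast at h
    rcases (by omega : j = -(m : ℤ) - 1 ∨ j + (k : ℤ) = (m : ℤ) + 1) with h1 | h1
    · have hc : cfun (2 * m) j = 0 := by
        simp only [cfun, hm, h1, Int.cast_eq_zero]
        have : |(-(m : ℤ) - 1)| = (m : ℤ) + 1 := by
          rw [abs_of_nonpos (by omega)]; ring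
        rw [this]; ring
      rw [hc, zero_mul]
    · have hc : cfun (2 * m) (j + (k : ℤ)) = 0 := by
        simp only [cfun, hm, h1, Int.cast_eq_zero]
        have : |((m : ℤ) + 1)| = (m : ℤ) + 1 := abs_of_nonneg (by omega)
        rw [this]; ring
      rw [hc, mul_zero]
  · rw [Finset.Icc_eq_empty (by omega), Finset.sum_empty]

lemma bhat_zero_pos (N : ℕ) : 0 < bhat N 0 := by
  rw [bhat_eq]
  have h0 : (0 : ℤ) ∈ Finset.Icc (-(N : ℤ) / 2 - 1) ((N : ℤ) / 2 + 1 - ((0 : ℕ) : ℤ)) := by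
    simp only [Finset.mem_Icc]; omega
  refine Finset.sum_pos' (fun j _ => ?_) ⟨0, h0, ?_⟩
  · have : cfun N (j + (0 : ℕ)) = cfun N j := by norm_num
    rw [this]; exact mul_self_nonneg _
  · have : cfun N ((0 : ℤ) + ((0 : ℕ) : ℤ)) = cfun N 0 := by norm_num
    rw [this]
    have hc : (0 : ℝ) < cfun N 0 := by
      simp only [cfun]
      have : |(0 : ℤ)| = 0 := abs_zero
      rw [this]
      have : (0 : ℤ) < (N : ℤ) / 2 + 1 - 0 := by omega
      exact_mod_cast this
    exact mul_pos hc hc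

lemma S_nonneg (N : ℕ) (θ φ : ℝ) :
    0 ≤ bhat N 0 + ∑ k ∈ Finset.Icc 1 (N + 2),
      bhat N k * (2 * Real.cos ((k : ℝ) * θ) * Real.cos ((k : ℝ) * φ)) := by
  have h1 := J_nonneg N (θ - φ)
  have h2 := J_nonneg N (θ + φ)
  have key : ∀ k ∈ Finset.Icc 1 (N + 2),
      bhat N k * (2 * Real.cos ((k : ℝ) * θ) * Real.cos ((k : ℝ) * φ))
        = bhat N k * Real.cos ((k : ℝ) * (θ - φ)) + bhat N k * Real.cos ((k : ℝ) * (θ + φ)) := by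
    intro k _
    have e1 : (k : ℝ) * (θ - φ) = (k : ℝ) * θ - (k : ℝ) * φ := by ring
    have e2 : (k : ℝ) * (θ + φ) = (k : ℝ) * θ + (k : ℝ) * φ := by ring
    rw [e1, e2, Real.cos_sub, Real.cos_add]
    ring
  rw [Finset.sum_congr rfl key, Finset.sum_add_distrib]
  linarith

lemma kernel_nonneg (N : ℕ) (hN : 2 ∣ N) (x y : ℝ)
    (hx : x ∈ Set.Icc (-1 : ℝ) 1) (hy : y ∈ Set.Icc (-1 : ℝ) 1) :
    0 ≤ ∑ k ∈ Finset.range (N + 1), (bhat N k / bhat N 0) * Tbar k x * Tbar k y := by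
  have hb0 : 0 < bhat N 0 := bhat_zero_pos N
  have hπ : 0 < Real.pi := Real.pi_pos
  set θ := Real.arccos x with hθdef
  set φ := Real.arccos y with hφdef
  have hθ : Real.cos θ = x := Real.cos_arccos hx.1 hx.2
  have hφ : Real.cos φ = y := Real.cos_arccos hy.1 hy.2
  have hsq : Real.sqrt (2 / Real.pi) * Real.sqrt (2 / Real.pi) = 2 / Real.pi :=
    Real.mul_self_sqrt (by positivity)
  have hsπ : Real.sqrt Real.pi * Real.sqrt Real.pi = Real.pi :=
    Real.mul_self_sqrt hπ.le
  have hrange : Finset.range (N + 1) = insert 0 (Finset.Icc 1 N) := by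
    ext a; simp only [Finset.mem_range, Finset.mem_insert, Finset.mem_Icc]; omega
  have htbar0 : ∀ z : ℝ, Tbar 0 z = 1 / Real.sqrt Real.pi := by
    intro z
    simp [Tbar, Polynomial.Chebyshev.T_zero]
  have htbar : ∀ (k : ℕ) (ψ : ℝ), k ≠ 0 →
      Tbar k (Real.cos ψ) = Real.sqrt (2 / Real.pi) * Real.cos ((k : ℝ) * ψ) := by
    intro k ψ hk
    simp only [Tbar, hk, if_false, Polynomial.Chebyshev.T_real_cos]
    norm_num
  have htot : ∑ k ∈ Finset.range (N + 1), (bhat N k / bhat N 0) * Tbar k x * Tbar k y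
      = (1 / (Real.pi * bhat N 0)) * (bhat N 0 + ∑ k ∈ Finset.Icc 1 N,
          bhat N k * (2 * Real.cos ((k : ℝ) * θ) * Real.cos ((k : ℝ) * φ))) := by
    rw [hrange, Finset.sum_insert (by simp), htbar0, htbar0, mul_add, Finset.mul_sum]
    congr 1
    · rw [div_self hb0.ne']
      field_simp
      rw [Real.sq_sqrt hπ.le]
    · refine Finset.sum_congr rfl ?_
      intro k hk
      simp only [Finset.mem_Icc] at hk
      rw [← hθ, ← hφ, htbar k θ (by omega), htbar k φ (by omega)]
      field_simp
      ring_nf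
      rw [Real.sq_sqrt (by positivity : (0:ℝ) ≤ Real.pi⁻¹ * 2)]
      linear_combination (bhat N k * 2 * Real.cos ((k : ℝ) * θ) * Real.cos ((k : ℝ) * φ)) * mul_inv_cancel₀ hπ.ne'
  rw [htot]
  refine mul_nonneg (by positivity) ?_
  have hext : ∑ k ∈ Finset.Icc 1 N,
        bhat N k * (2 * Real.cos ((k : ℝ) * θ) * Real.cos ((k : ℝ) * φ))
      = ∑ k ∈ Finset.Icc 1 (N + 2),
        bhat N k * (2 * Real.cos ((k : ℝ) * θ) * Real.cos ((k : ℝ) * φ)) := by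
    refine Finset.sum_subset (Finset.Icc_subset_Icc_right (by omega)) ?_
    intro k hk hk'
    simp only [Finset.mem_Icc] at hk hk'
    rw [bhat_eq_zero N k hN (by omega), zero_mul]
  rw [hext]
  exact S_nonneg N θ φ

lemma wCheb_nonneg (x : ℝ) : 0 ≤ wCheb x := by
  unfold wCheb; positivity

lemma aux_inv (a b : ℝ) (ha : 0 ≤ a) (hb : 1 ≤ b) : (a * b)⁻¹ ≤ a⁻¹ := by
  rcases eq_or_lt_of_le ha with h | h
  · rw [← h, zero_mul, inv_zero]
  · rw [← one_div, ← one_div]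
    exact one_div_le_one_div_of_le h (le_mul_of_one_le_right h.le hb)

lemma wCheb_integrable : IntervalIntegrable wCheb volume (-1) 1 := by
  have h1 : IntervalIntegrable (fun t : ℝ => t ^ (-(1/2) : ℝ)) volume 0 2 :=
    intervalIntegral.intervalIntegrable_rpow' (by norm_num)
  have h2 : IntervalIntegrable (fun y : ℝ => (1 - y) ^ (-(1/2) : ℝ)) volume (-1) 1 := by
    have := (h1.comp_sub_left 1).symm
    norm_num at this
    exact this
  have h3 : IntervalIntegrable (fun y : ℝ => (1 + y) ^ (-(1/2) : ℝ)) volume (-1) 1 := by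
    have := h1.comp_add_left 1
    norm_num at this
    exact this
  refine (h2.add h3).mono_fun ?_ ?_
  · refine Measurable.aestronglyMeasurable ?_
    unfold wCheb
    simp only [one_div]
    exact ((measurable_const.sub (measurable_id.pow_const 2)).sqrt).inv
  · rw [Filter.EventuallyLE, ae_restrict_iff' measurableSet_uIoc]
    refine Filter.Eventually.of_forall ?_
    intro y hy
    rw [Set.uIoc_of_le (by norm_num : (-1:ℝ) ≤ 1)] at hy
    have hy1 : 0 ≤ 1 - y := by linarith [hy.2]
    have hy2 : 0 < 1 + y := by linarith [hy.1]
    have hA : (1 - y) ^ (-(1/2) : ℝ) = (Real.sqrt (1 - y))⁻¹ := by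
      rw [Real.rpow_neg hy1, Real.sqrt_eq_rpow]
    have hB : (1 + y) ^ (-(1/2) : ℝ) = (Real.sqrt (1 + y))⁻¹ := by
      rw [Real.rpow_neg hy2.le, Real.sqrt_eq_rpow]
    have hAn : 0 ≤ (Real.sqrt (1 - y))⁻¹ := by positivity
    have hBn : 0 ≤ (Real.sqrt (1 + y))⁻¹ := by positivity
    have hw : ‖wCheb y‖ = wCheb y := Real.norm_of_nonneg (wCheb_nonneg y)
    rw [hw, hA, hB, Real.norm_of_nonneg (by linarith)]
    have hsqrt : Real.sqrt (1 - y ^ 2) = Real.sqrt (1 - y) * Real.sqrt (1 + y) := by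
      rw [show 1 - y ^ 2 = (1 - y) * (1 + y) by ring, Real.sqrt_mul hy1]
    unfold wCheb
    rw [hsqrt, one_div]
    rcases le_or_gt 0 y with hy0 | hy0
    · have hle : (Real.sqrt (1 - y) * Real.sqrt (1 + y))⁻¹ ≤ (Real.sqrt (1 - y))⁻¹ :=
        aux_inv _ _ (Real.sqrt_nonneg _) (Real.one_le_sqrt.2 (by linarith))
      linarith
    · have hle : (Real.sqrt (1 - y) * Real.sqrt (1 + y))⁻¹ ≤ (Real.sqrt (1 + y))⁻¹ := by
        rw [mul_comm]
        exact aux_inv _ _ (Real.sqrt_nonneg _) (Real.one_le_sqrt.2 (by linarith))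
      linarith

lemma Tbar_continuous (k : ℕ) : Continuous (Tbar k) := by
  unfold Tbar
  split_ifs
  · exact (Polynomial.continuous _).div_const _
  · exact continuous_const.mul (Polynomial.continuous _)

lemma wCheb_measurable : Measurable wCheb := by
  unfold wCheb
  simp only [one_div]
  exact ((measurable_const.sub (measurable_id.pow_const 2)).sqrt).inv

lemma term_integrable (f : ℝ → ℝ) (hcont : ContinuousOn f (Set.Icc (-1 : ℝ) 1)) (k : ℕ) :
    IntervalIntegrable (fun y => f y * (wCheb y * Tbar k y)) volume (-1) 1 := by
  obtain ⟨C, hC⟩ :=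
    (isCompact_Icc : IsCompact (Set.Icc (-1 : ℝ) 1)).exists_bound_of_continuousOn hcont
  obtain ⟨D, hD⟩ := (isCompact_Icc : IsCompact (Set.Icc (-1 : ℝ) 1)).exists_bound_of_continuousOn
    (Tbar_continuous k).continuousOn
  have hC0 : 0 ≤ C := le_trans (norm_nonneg _) (hC (-1) (by norm_num))
  have hD0 : 0 ≤ D := le_trans (norm_nonneg _) (hD (-1) (by norm_num))
  refine (wCheb_integrable.const_mul (C * D)).mono_fun ?_ ?_
  · rw [Set.uIoc_of_le (by norm_num : (-1:ℝ) ≤ 1)]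
    have hf : AEStronglyMeasurable f (volume.restrict (Set.Ioc (-1:ℝ) 1)) :=
      (hcont.mono Set.Ioc_subset_Icc_self).aestronglyMeasurable measurableSet_Ioc
    exact hf.mul ((wCheb_measurable.aestronglyMeasurable).mul
      (Tbar_continuous k).aestronglyMeasurable)
  · rw [Filter.EventuallyLE, ae_restrict_iff' measurableSet_uIoc]
    refine Filter.Eventually.of_forall ?_
    intro y hy
    rw [Set.uIoc_of_le (by norm_num : (-1:ℝ) ≤ 1)] at hy
    have hyIcc : y ∈ Set.Icc (-1:ℝ) 1 := Set.Ioc_subset_Icc_self hy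
    have h1 : ‖f y‖ ≤ C := hC y hyIcc
    have h2 : ‖Tbar k y‖ ≤ D := hD y hyIcc
    have hwn : ‖wCheb y‖ = wCheb y := Real.norm_of_nonneg (wCheb_nonneg y)
    have hw0 : 0 ≤ wCheb y := wCheb_nonneg y
    calc ‖f y * (wCheb y * Tbar k y)‖ = ‖f y‖ * (wCheb y * ‖Tbar k y‖) := by
          rw [norm_mul, norm_mul, hwn]
      _ ≤ C * (wCheb y * ‖Tbar k y‖) := by
          refine mul_le_mul_of_nonneg_right h1 (by positivity)
      _ ≤ C * (wCheb y * D) := by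
          refine mul_le_mul_of_nonneg_left (mul_le_mul_of_nonneg_left h2 hw0) hC0
      _ = C * D * wCheb y := by ring
      _ ≤ ‖C * D * wCheb y‖ := le_abs_self _

/-- **The Jackson damped Chebyshev approximation preserves non-negativity.**
If `f : [-1,1] → ℝ` is continuous and non-negative and `N` is a positive multiple of `4`,
then `f̄_N ≥ 0` on `[-1,1]`. -/
theorem jacksonApprox_nonneg (N : ℕ) (hNpos : 0 < N) (hN4 : 4 ∣ N)
    (f : ℝ → ℝ) (hcont : ContinuousOn f (Set.Icc (-1 : ℝ) 1))
    (hpos : ∀ x ∈ Set.Icc (-1 : ℝ) 1, 0 ≤ f x) :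
    ∀ x ∈ Set.Icc (-1 : ℝ) 1, 0 ≤ jacksonApprox N f x := by
  intro x hx
  have h2 : 2 ∣ N := dvd_trans (by norm_num) hN4
  unfold jacksonApprox
  have step1 : ∀ k ∈ Finset.range (N + 1),
      (bhat N k / bhat N 0) * chebCoeff f k * Tbar k x
        = ∫ y in (-1:ℝ)..1, (bhat N k / bhat N 0 * Tbar k x) * (f y * (wCheb y * Tbar k y)) := by
    intro k _
    rw [intervalIntegral.integral_const_mul]
    unfold chebCoeff
    ring
  rw [Finset.sum_congr rfl step1, ← intervalIntegral.integral_finset_sum]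
  · refine intervalIntegral.integral_nonneg (by norm_num) ?_
    intro y hy
    have hker := kernel_nonneg N h2 x y hx hy
    have hre : ∑ k ∈ Finset.range (N + 1),
        (bhat N k / bhat N 0 * Tbar k x) * (f y * (wCheb y * Tbar k y))
          = (f y * wCheb y) * ∑ k ∈ Finset.range (N + 1),
              bhat N k / bhat N 0 * Tbar k x * Tbar k y := by
      rw [Finset.mul_sum]
      exact Finset.sum_congr rfl (fun k _ => by ring)
    rw [hre]
    exact mul_nonneg (mul_nonneg (hpos y hy) (wCheb_nonneg y)) hker
  · intro k _
    exact (term_integrable f hcont k).const_mul _
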